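/- For θ ∈ (0, π/4], c ∈ (0,1), λ ∈ (0,2], define ρ(θ,c,λ) as the largest root modulus of ρ² - (λc·cos 2θ - λ + 2)ρ + (c·sin²θ·λ² - (1 - c·cos 2θ)λ + 1) = 0. Then the minimizer over λ is λ*(θ,c) = 2 if c ≤ 1/(2 - cos 2θ), and λ*(θ,c) = (1/c - cos 2θ)/(1 - cos 2θ) if c ≥ 1/(2 - cos 2θ); λ* is continuous and non-increasing in c with range (1,2] for c ∈ (0,1). -/

import Mathlib

open Real

/-- The optimal relaxation parameter `λ*(θ,c)` for generalized Douglas–Rachford. -/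
noncomputable def lamStar (θ c : ℝ) : ℝ :=
  if c ≤ 1 / (2 - Real.cos (2 * θ)) then 2
  else (1 / c - Real.cos (2 * θ)) / (1 - Real.cos (2 * θ))

lemma quad_roots' {B C : ℝ} {z₁ z₂ z : ℂ} (h1 : z₁ + z₂ = (B : ℂ))
    (h2 : z₁ * z₂ = (C : ℂ)) (hz : z ^ 2 - (B : ℂ) * z + (C : ℂ) = 0) :
    z = z₁ ∨ z = z₂ := by
  have h : (z - z₁) * (z - z₂) = 0 := by linear_combination hz - z * h1 + h2
  rcases mul_eq_zero.1 h with h | h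
  · exact Or.inl (sub_eq_zero.1 h)
  · exact Or.inr (sub_eq_zero.1 h)

lemma quad_greatest_real (B C : ℝ) (hB : 0 ≤ B) (hΔ : 0 ≤ B ^ 2 - 4 * C) :
    IsGreatest {r : ℝ | ∃ z : ℂ, z ^ 2 - (B : ℂ) * z + (C : ℂ) = 0 ∧ r = ‖z‖}
      ((B + Real.sqrt (B ^ 2 - 4 * C)) / 2) := by
  set u := Real.sqrt (B ^ 2 - 4 * C) with hu
  have hu0 : 0 ≤ u := Real.sqrt_nonneg _
  have hu2 : u ^ 2 = B ^ 2 - 4 * C := Real.sq_sqrt hΔ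
  have h1 : (((B + u) / 2 : ℝ) : ℂ) + (((B - u) / 2 : ℝ) : ℂ) = (B : ℂ) := by
    push_cast; ring
  have h2 : (((B + u) / 2 : ℝ) : ℂ) * (((B - u) / 2 : ℝ) : ℂ) = (C : ℂ) := by
    push_cast
    have : ((B + u) / 2) * ((B - u) / 2) = C := by nlinarith [hu2]
    have h' := congrArg Complex.ofReal this; push_cast at h' ⊢; linear_combination h'
  constructor
  · refine ⟨(((B + u) / 2 : ℝ) : ℂ), ?_, ?_⟩
    · linear_combination (((B + u) / 2 : ℝ) : ℂ) * h1 - h2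
    · rw [Complex.norm_real, Real.norm_eq_abs, abs_of_nonneg (by positivity)]
  · rintro r ⟨z, hz, rfl⟩
    rcases quad_roots' h1 h2 hz with rfl | rfl
    · rw [Complex.norm_real, Real.norm_eq_abs, abs_of_nonneg (by positivity)]
    · rw [Complex.norm_real, Real.norm_eq_abs]
      have : |(B - u) / 2| ≤ (B + u) / 2 := abs_le.2 ⟨by linarith, by linarith⟩
      linarith

lemma quad_greatest_complex (B C : ℝ) (hΔ : B ^ 2 - 4 * C < 0) :
    IsGreatest {r : ℝ | ∃ z : ℂ, z ^ 2 - (B : ℂ) * z + (C : ℂ) = 0 ∧ r = ‖z‖}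
      (Real.sqrt C) := by
  set v := Real.sqrt (4 * C - B ^ 2) with hv
  have hv0 : 0 ≤ v := Real.sqrt_nonneg _
  have hv2 : v ^ 2 = 4 * C - B ^ 2 := Real.sq_sqrt (by linarith)
  set z₁ : ℂ := ⟨B / 2, v / 2⟩ with hz₁
  set z₂ : ℂ := ⟨B / 2, -(v / 2)⟩ with hz₂
  have h1 : z₁ + z₂ = (B : ℂ) := by
    apply Complex.ext <;> simp [hz₁, hz₂]
  have h2 : z₁ * z₂ = (C : ℂ) := by
    apply Complex.ext <;>
      simp [hz₁, hz₂, Complex.mul_re, Complex.mul_im] <;> nlinarith [hv2]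
  have habs : ∀ w : ℂ, w = z₁ ∨ w = z₂ → ‖w‖ = Real.sqrt C := by
    rintro w (rfl | rfl) <;>
    · rw [Complex.norm_def, Complex.normSq_mk]
      congr 1
      nlinarith [hv2]
  constructor
  · refine ⟨z₁, ?_, (habs z₁ (Or.inl rfl)).symm⟩
    linear_combination z₁ * h1 - h2
  · rintro r ⟨z, hz, rfl⟩
    rw [habs z (quad_roots' h1 h2 hz)]


set_option maxHeartbeats 1600000 in
/-- Let `ρ(θ,c,λ)` be the largest root modulus of
`ρ² - (λc·cos 2θ - λ + 2)ρ + (c·sin²θ·λ² - (1 - c·cos 2θ)λ + 1) = 0`. Then the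
minimizer of `λ ↦ ρ(θ,c,λ)` over `(0,2]` is `λ*(θ,c)` (equal to `2` for
`c ≤ 1/(2 - cos 2θ)` and to `(1/c - cos 2θ)/(1 - cos 2θ)` otherwise); moreover
`λ*(θ,·)` is continuous and non-increasing on `(0,1)` with range `(1,2]`. -/
theorem stmt18 (θ c : ℝ) (hθ : θ ∈ Set.Ioc 0 (π / 4)) (hc : c ∈ Set.Ioo (0:ℝ) 1)
    (ρ : ℝ → ℝ)
    (hρ : ∀ lam ∈ Set.Ioc (0:ℝ) 2,
      IsGreatest {r : ℝ | ∃ z : ℂ,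
        z ^ 2 - ((lam * c * Real.cos (2 * θ) - lam + 2 : ℝ) : ℂ) * z
          + ((c * Real.sin θ ^ 2 * lam ^ 2 - (1 - c * Real.cos (2 * θ)) * lam + 1 : ℝ) : ℂ) = 0 ∧
        r = ‖z‖} (ρ lam)) :
    (∀ lam ∈ Set.Ioc (0:ℝ) 2, ρ (lamStar θ c) ≤ ρ lam) ∧
    lamStar θ c ∈ Set.Ioc (1:ℝ) 2 ∧
    AntitoneOn (lamStar θ) (Set.Ioo 0 1) ∧
    ContinuousOn (lamStar θ) (Set.Ioo 0 1) ∧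
    (lamStar θ) '' (Set.Ioo 0 1) = Set.Ioc 1 2 := by
  obtain ⟨hθ1, hθ2⟩ := hθ
  obtain ⟨hc0, hc1⟩ := hc
  have hpi := Real.pi_pos
  have hd0 : 0 ≤ Real.cos (2 * θ) := Real.cos_nonneg_of_mem_Icc ⟨by linarith, by linarith⟩
  have hst : 0 < Real.sin θ := Real.sin_pos_of_pos_of_lt_pi hθ1 (by linarith)
  have hs2 : Real.sin θ ^ 2 = (1 - Real.cos (2 * θ)) / 2 := by
    have h := Real.cos_two_mul θ
    have h' := Real.sin_sq_add_cos_sq θ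
    linarith
  set d := Real.cos (2 * θ) with hd
  have hd1 : d < 1 := by nlinarith
  have h2d : (0:ℝ) < 2 - d := by linarith
  have h1d : (0:ℝ) < 1 - d := by linarith
  have hcd : c * d < 1 := by nlinarith
  clear_value d
  set K := c ^ 2 * d ^ 2 - 2 * c + 1 with hK
  clear_value K
  -- min formula
  have hmin : ∀ x : ℝ, 0 < x → lamStar θ x = min 2 ((1 / x - d) / (1 - d)) := by
    intro x hx
    rw [lamStar, ← hd]
    by_cases hle : x ≤ 1 / (2 - d)
    · rw [if_pos hle, eq_comm, min_eq_left]
      have hx' : 2 - d ≤ 1 / x := by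
        rw [le_div_iff₀ hx]
        have := mul_le_mul_of_nonneg_right hle h2d.le
        have he : (1 / (2 - d)) * (2 - d) = 1 := by field_simp
        nlinarith
      rw [le_div_iff₀ h1d]
      linarith
    · rw [if_neg hle, eq_comm, min_eq_right]
      push_neg at hle
      have hx' : 1 / x < 2 - d := by
        rw [div_lt_iff₀ hx]
        have := mul_lt_mul_of_pos_right hle h2d
        have he : (1 / (2 - d)) * (2 - d) = 1 := by field_simp
        nlinarith
      rw [div_le_iff₀ h1d]
      linarith
  -- membership, general
  have hmem : ∀ x ∈ Set.Ioo (0:ℝ) 1, lamStar θ x ∈ Set.Ioc (1:ℝ) 2 := by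
    intro x hx
    rw [hmin x hx.1]
    constructor
    · apply lt_min one_lt_two
      rw [lt_div_iff₀ h1d]
      have : (1:ℝ) < 1 / x := by rw [lt_div_iff₀ hx.1]; nlinarith [hx.2]
      linarith
    · exact min_le_left _ _
  refine ⟨?_, hmem c ⟨hc0, hc1⟩, ?_, ?_, ?_⟩
  · -- minimizer
    -- explicit formula for ρ
    have hrho : ∀ l ∈ Set.Ioc (0:ℝ) 2,
        ρ l = if 0 ≤ K then (l * c * d - l + 2 + l * Real.sqrt K) / 2
              else Real.sqrt (c * Real.sin θ ^ 2 * l ^ 2 - (1 - c * d) * l + 1) := by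
      intro l hl
      have hB0 : 0 ≤ l * c * d - l + 2 := by nlinarith [hl.1, hl.2]
      have hdisc : (l * c * d - l + 2) ^ 2
          - 4 * (c * Real.sin θ ^ 2 * l ^ 2 - (1 - c * d) * l + 1) = l ^ 2 * K := by
        rw [hK]; linear_combination (-4 * c * l ^ 2) * hs2
      by_cases hKs : 0 ≤ K
      · have hg := quad_greatest_real (l * c * d - l + 2)
          (c * Real.sin θ ^ 2 * l ^ 2 - (1 - c * d) * l + 1) hB0
          (by rw [hdisc]; exact mul_nonneg (sq_nonneg l) hKs)
        have he := (hρ l hl).unique hg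
        rw [if_pos hKs, he, hdisc, Real.sqrt_mul (sq_nonneg l),
          Real.sqrt_sq hl.1.le]
      · push_neg at hKs
        have hg := quad_greatest_complex (l * c * d - l + 2)
          (c * Real.sin θ ^ 2 * l ^ 2 - (1 - c * d) * l + 1)
          (by rw [hdisc]; exact mul_neg_of_pos_of_neg (pow_pos hl.1 2) hKs)
        have he := (hρ l hl).unique hg
        rw [if_neg (not_le.2 hKs), he]
    -- lamStar in (0,2]
    have hstar : lamStar θ c ∈ Set.Ioc (0:ℝ) 2 := by
      rw [lamStar, ← hd]
      by_cases hle : c ≤ 1 / (2 - d)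
      · rw [if_pos hle]; exact ⟨by norm_num, le_refl 2⟩
      · rw [if_neg hle]
        push_neg at hle
        have h1c : 1 / c < 2 - d := by
          rw [div_lt_iff₀ hc0]
          have := mul_lt_mul_of_pos_right hle h2d
          have he : (1 / (2 - d)) * (2 - d) = 1 := by field_simp
          nlinarith
        have h1c' : 1 < 1 / c := by rw [lt_div_iff₀ hc0]; nlinarith
        constructor
        · apply div_pos (by linarith) h1d
        · rw [div_le_iff₀ h1d]; linarith
    intro lam hlam
    rw [hrho _ hstar, hrho lam hlam]
    by_cases hKs : 0 ≤ K
    · rw [if_pos hKs, if_pos hKs]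
      -- K ≥ 0 forces c ≤ 1/(2-d), so lamStar = 2
      have hc2d : c * (2 - d) ≤ 1 := by nlinarith [mul_nonneg hc0.le hd0]
      have hle : c ≤ 1 / (2 - d) := by rw [le_div_iff₀ h2d]; linarith
      have hstar2 : lamStar θ c = 2 := by rw [lamStar, ← hd, if_pos hle]
      rw [hstar2]
      have hsK : Real.sqrt K ≤ 1 - c * d := by
        have : K ≤ (1 - c * d) ^ 2 := by rw [hK]; nlinarith [mul_nonneg hc0.le hd0]
        calc Real.sqrt K ≤ Real.sqrt ((1 - c * d) ^ 2) := Real.sqrt_le_sqrt this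
          _ = 1 - c * d := by rw [Real.sqrt_sq (by linarith)]
      nlinarith [hlam.2, Real.sqrt_nonneg K]
    · rw [if_neg hKs, if_neg hKs]
      push_neg at hKs
      apply Real.sqrt_le_sqrt
      -- compare C(lamStar) ≤ C(lam)
      rw [lamStar, ← hd]
      by_cases hle : c ≤ 1 / (2 - d)
      · rw [if_pos hle]
        have hc2d : c * (2 - d) ≤ 1 := by
          have := mul_le_mul_of_nonneg_right hle h2d.le
          have he : (1 / (2 - d)) * (2 - d) = 1 := by field_simp
          nlinarith
        have hinner : 0 ≤ 1 - c * d - c * Real.sin θ ^ 2 * (lam + 2) := by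
          rw [hs2]
          nlinarith [hlam.2, mul_nonneg (mul_nonneg hc0.le h1d.le)
            (show (0:ℝ) ≤ 2 - lam by linarith [hlam.2])]
        have hA : 0 ≤ (2 - lam) * (1 - c * d - c * Real.sin θ ^ 2 * (lam + 2)) :=
          mul_nonneg (by linarith [hlam.2]) hinner
        nlinarith [hA]
      · rw [if_neg hle]
        set l0 := (1 / c - d) / (1 - d) with hl0
        have hcl0 : c * (1 - d) * l0 = 1 - c * d := by
          rw [hl0]; field_simp
        clear_value l0
        have h0 : 2 * c * Real.sin θ ^ 2 * l0 - (1 - c * d) = 0 := by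
          linear_combination 2 * c * l0 * hs2 + hcl0
        have hid : (c * Real.sin θ ^ 2 * lam ^ 2 - (1 - c * d) * lam + 1)
            - (c * Real.sin θ ^ 2 * l0 ^ 2 - (1 - c * d) * l0 + 1)
            = c * Real.sin θ ^ 2 * (lam - l0) ^ 2
              + (lam - l0) * (2 * c * Real.sin θ ^ 2 * l0 - (1 - c * d)) := by ring
        have h3 : 0 ≤ c * Real.sin θ ^ 2 * (lam - l0) ^ 2 := by positivity
        have h4 : (lam - l0) * (2 * c * Real.sin θ ^ 2 * l0 - (1 - c * d)) = 0 := by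
          linear_combination (lam - l0) * h0
        linarith only [hid, h3, h4]
  · -- antitone
    intro a ha b hb hab
    rw [hmin a ha.1, hmin b hb.1]
    apply min_le_min le_rfl
    have h1 : 1 / b ≤ 1 / a := one_div_le_one_div_of_le ha.1 hab
    exact (div_le_div_iff_of_pos_right h1d).mpr (by linarith)
  · -- continuous
    apply ContinuousOn.congr (f := fun x : ℝ => min 2 ((1 / x - d) / (1 - d)))
    · apply ContinuousOn.inf continuousOn_const
      apply ContinuousOn.div ?_ continuousOn_const (fun x _ => by positivity)
      apply ContinuousOn.sub ?_ continuousOn_const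
      exact continuousOn_const.div continuousOn_id (fun x hx => ne_of_gt hx.1)
    · intro x hx; exact hmin x hx.1
  · -- image
    ext y
    constructor
    · rintro ⟨x, hx, rfl⟩; exact hmem x hx
    · rintro ⟨hy1, hy2⟩
      refine ⟨1 / (y * (1 - d) + d), ⟨?_, ?_⟩, ?_⟩
      · positivity
      · rw [div_lt_one (by nlinarith)]; nlinarith
      · rw [hmin _ (by positivity)]
        rw [one_div_one_div]
        have : (y * (1 - d) + d - d) / (1 - d) = y := by field_simp; ring
        rw [this, min_eq_right hy2]
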